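/- In Cl(4,ℂ), the CNOT element λ_CNOT = f₁f₁† − f₁†f₁(f₂ + f₂†) acts correctly on the 2-qubit basis: it fixes |00⟩ = f₁f₁†f₂f₂† and |01⟩ = f₂†f₁f₁†, and swaps |10⟩ = f₁†f₂f₂† with |11⟩ = f₁†f₂†·(f₁f₁†f₂f₂†) — i.e. λ_CNOT·|10⟩ = |11⟩ and λ_CNOT·|11⟩ = |10⟩. -/

import Mathlib

open CliffordAlgebra

/-- The standard quadratic form on ℂ⁴ making e₁,…,e₄ orthonormal. -/
noncomputable def Q4 : QuadraticForm ℂ (Fin 4 → ℂ) :=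
  QuadraticMap.weightedSumSquares ℂ (fun _ : Fin 4 => (1 : ℂ))

/-- The orthonormal generators of Cl(4,ℂ). -/
noncomputable def e (i : Fin 4) : CliffordAlgebra Q4 := ι Q4 (Pi.single i 1)

/-- The Witt basis element f₁ = (1/2)(e₁ - i e₃). -/
noncomputable def f1 : CliffordAlgebra Q4 := (1/2 : ℂ) • (e 0 - Complex.I • e 2)
/-- The Witt basis element f₁† = (1/2)(e₁ + i e₃). -/
noncomputable def f1d : CliffordAlgebra Q4 := (1/2 : ℂ) • (e 0 + Complex.I • e 2)
/-- The Witt basis element f₂ = (1/2)(e₂ - i e₄). -/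
noncomputable def f2 : CliffordAlgebra Q4 := (1/2 : ℂ) • (e 1 - Complex.I • e 3)
/-- The Witt basis element f₂† = (1/2)(e₂ + i e₄). -/
noncomputable def f2d : CliffordAlgebra Q4 := (1/2 : ℂ) • (e 1 + Complex.I • e 3)

/-- Abstract CNOT computation from the CAR relations, in any ring. -/
theorem cnot_key {R : Type*} [Ring R] (a ad b bd : R)
    (haa : a * a = 0) (hadad : ad * ad = 0) (hbb : b * b = 0) (hbdbd : bd * bd = 0)
    (h1 : a * ad + ad * a = 1) (h2 : b * bd + bd * b = 1)
    (hab : a * b = -(b * a)) (habd : a * bd = -(bd * a))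
    (hadb : ad * b = -(b * ad)) (hadbd : ad * bd = -(bd * ad)) :
    (a * ad - ad * a * (b + bd)) * (a * ad * (b * bd)) = a * ad * (b * bd) ∧
    (a * ad - ad * a * (b + bd)) * (bd * (a * ad)) = bd * (a * ad) ∧
    (a * ad - ad * a * (b + bd)) * (ad * (b * bd)) = ad * bd * (a * ad * (b * bd)) ∧
    (a * ad - ad * a * (b + bd)) * (ad * bd * (a * ad * (b * bd))) = ad * (b * bd) := by
  have ba : b * a = -(a * b) := by rw [hab, neg_neg]
  have bda : bd * a = -(a * bd) := by rw [habd, neg_neg]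
  have bad : b * ad = -(ad * b) := by rw [hadb, neg_neg]
  have bdad : bd * ad = -(ad * bd) := by rw [hadbd, neg_neg]
  have ada : ad * a = 1 - a * ad := by rw [eq_sub_iff_add_eq, add_comm]; exact h1
  have bdb : bd * b = 1 - b * bd := by rw [eq_sub_iff_add_eq, add_comm]; exact h2
  have haa' : ∀ x, a * (a * x) = 0 := fun x => by rw [← mul_assoc, haa, zero_mul]
  have hadad' : ∀ x, ad * (ad * x) = 0 := fun x => by rw [← mul_assoc, hadad, zero_mul]
  have hbb' : ∀ x, b * (b * x) = 0 := fun x => by rw [← mul_assoc, hbb, zero_mul]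
  have hbdbd' : ∀ x, bd * (bd * x) = 0 := fun x => by rw [← mul_assoc, hbdbd, zero_mul]
  have ba' : ∀ x, b * (a * x) = -(a * (b * x)) := fun x => by
    rw [← mul_assoc, ba, ← mul_assoc, neg_mul]
  have bda' : ∀ x, bd * (a * x) = -(a * (bd * x)) := fun x => by
    rw [← mul_assoc, bda, ← mul_assoc, neg_mul]
  have bad' : ∀ x, b * (ad * x) = -(ad * (b * x)) := fun x => by
    rw [← mul_assoc, bad, ← mul_assoc, neg_mul]
  have bdad' : ∀ x, bd * (ad * x) = -(ad * (bd * x)) := fun x => by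
    rw [← mul_assoc, bdad, ← mul_assoc, neg_mul]
  have ada' : ∀ x, ad * (a * x) = x - a * (ad * x) := fun x => by
    rw [← mul_assoc, ada, sub_mul, one_mul, ← mul_assoc]
  have bdb' : ∀ x, bd * (b * x) = x - b * (bd * x) := fun x => by
    rw [← mul_assoc, bdb, sub_mul, one_mul, ← mul_assoc]
  refine ⟨?_, ?_, ?_, ?_⟩ <;>
    simp only [mul_assoc, mul_add, add_mul, mul_sub, sub_mul, mul_neg, neg_mul, mul_one,
      one_mul, mul_zero, zero_mul, haa, hadad, hbb, hbdbd, haa', hadad', hbb', hbdbd',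
      ba, bda, bad, bdad, ba', bda', bad', bdad', ada, bdb, ada', bdb',
      neg_neg, sub_zero, zero_sub, add_zero, zero_add, neg_zero] <;>
    abel

/-- The coordinate vector of f₁. -/
noncomputable def v1 : Fin 4 → ℂ := ![1/2, 0, -(Complex.I/2), 0]
/-- The coordinate vector of f₁†. -/
noncomputable def v1d : Fin 4 → ℂ := ![1/2, 0, Complex.I/2, 0]
/-- The coordinate vector of f₂. -/
noncomputable def v2 : Fin 4 → ℂ := ![0, 1/2, 0, -(Complex.I/2)]
/-- The coordinate vector of f₂†. -/
noncomputable def v2d : Fin 4 → ℂ := ![0, 1/2, 0, Complex.I/2]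

lemma f1_eq : f1 = ι Q4 v1 := by
  have h : v1 = (1/2 : ℂ) • ((Pi.single 0 1 : Fin 4 → ℂ)
      - Complex.I • (Pi.single 2 1 : Fin 4 → ℂ)) := by
    funext i; fin_cases i <;> simp [v1] <;> ring
  rw [h, map_smul, map_sub, map_smul, f1, e, e]

lemma f1d_eq : f1d = ι Q4 v1d := by
  have h : v1d = (1/2 : ℂ) • ((Pi.single 0 1 : Fin 4 → ℂ)
      + Complex.I • (Pi.single 2 1 : Fin 4 → ℂ)) := by
    funext i; fin_cases i <;> simp [v1d] <;> ring
  rw [h, map_smul, map_add, map_smul, f1d, e, e]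

lemma f2_eq : f2 = ι Q4 v2 := by
  have h : v2 = (1/2 : ℂ) • ((Pi.single 1 1 : Fin 4 → ℂ)
      - Complex.I • (Pi.single 3 1 : Fin 4 → ℂ)) := by
    funext i; fin_cases i <;> simp [v2] <;> ring
  rw [h, map_smul, map_sub, map_smul, f2, e, e]

lemma f2d_eq : f2d = ι Q4 v2d := by
  have h : v2d = (1/2 : ℂ) • ((Pi.single 1 1 : Fin 4 → ℂ)
      + Complex.I • (Pi.single 3 1 : Fin 4 → ℂ)) := by
    funext i; fin_cases i <;> simp [v2d] <;> ring
  rw [h, map_smul, map_add, map_smul, f2d, e, e]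

lemma Q4_apply' (v : Fin 4 → ℂ) : Q4 v = v 0 * v 0 + v 1 * v 1 + v 2 * v 2 + v 3 * v 3 := by
  simp [Q4, QuadraticMap.weightedSumSquares_apply, Fin.sum_univ_four]

lemma polar_apply (v w : Fin 4 → ℂ) : QuadraticMap.polar Q4 v w =
    2 * (v 0 * w 0 + v 1 * w 1 + v 2 * w 2 + v 3 * w 3) := by
  simp only [QuadraticMap.polar, Q4_apply', Pi.add_apply]; ring

lemma sq_zero_of_Q_zero (v : Fin 4 → ℂ) (h : Q4 v = 0) : ι Q4 v * ι Q4 v = 0 := by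
  rw [ι_sq_scalar, h, map_zero]

lemma anticomm_of_polar_zero (v w : Fin 4 → ℂ) (h : QuadraticMap.polar Q4 v w = 0) :
    ι Q4 v * ι Q4 w = -(ι Q4 w * ι Q4 v) := by
  have := ι_mul_ι_add_swap (Q := Q4) v w
  rw [h, map_zero] at this
  exact eq_neg_of_add_eq_zero_left this

lemma car_of_polar_one (v w : Fin 4 → ℂ) (h : QuadraticMap.polar Q4 v w = 1) :
    ι Q4 v * ι Q4 w + ι Q4 w * ι Q4 v = 1 := by
  have := ι_mul_ι_add_swap (Q := Q4) v w
  rw [h, map_one] at this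
  exact this

/-- the CNOT element fixes |00⟩ and |01⟩ and swaps |10⟩ with |11⟩. -/
theorem CNOT_action :
    (f1 * f1d - f1d * f1 * (f2 + f2d)) * (f1 * f1d * (f2 * f2d)) =
      f1 * f1d * (f2 * f2d) ∧
    (f1 * f1d - f1d * f1 * (f2 + f2d)) * (f2d * (f1 * f1d)) = f2d * (f1 * f1d) ∧
    (f1 * f1d - f1d * f1 * (f2 + f2d)) * (f1d * (f2 * f2d)) =
      f1d * f2d * (f1 * f1d * (f2 * f2d)) ∧
    (f1 * f1d - f1d * f1 * (f2 + f2d)) * (f1d * f2d * (f1 * f1d * (f2 * f2d))) =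
      f1d * (f2 * f2d) := by
  rw [f1_eq, f1d_eq, f2_eq, f2d_eq]
  apply cnot_key
  · exact sq_zero_of_Q_zero v1 (by
      rw [Q4_apply']; simp only [v1]; norm_num [Matrix.cons_val_two, Matrix.cons_val_three]
      linear_combination (1/4 : ℂ) * Complex.I_sq)
  · exact sq_zero_of_Q_zero v1d (by
      rw [Q4_apply']; simp only [v1d]; norm_num [Matrix.cons_val_two, Matrix.cons_val_three]
      linear_combination (1/4 : ℂ) * Complex.I_sq)
  · exact sq_zero_of_Q_zero v2 (by
      rw [Q4_apply']; simp only [v2]; norm_num [Matrix.cons_val_two, Matrix.cons_val_three]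
      linear_combination (1/4 : ℂ) * Complex.I_sq)
  · exact sq_zero_of_Q_zero v2d (by
      rw [Q4_apply']; simp only [v2d]; norm_num [Matrix.cons_val_two, Matrix.cons_val_three]
      linear_combination (1/4 : ℂ) * Complex.I_sq)
  · exact car_of_polar_one v1 v1d (by
      rw [polar_apply]; simp only [v1, v1d]; norm_num [Matrix.cons_val_two, Matrix.cons_val_three]
      linear_combination (-1/2 : ℂ) * Complex.I_sq)
  · exact car_of_polar_one v2 v2d (by
      rw [polar_apply]; simp only [v2, v2d]; norm_num [Matrix.cons_val_two, Matrix.cons_val_three]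
      linear_combination (-1/2 : ℂ) * Complex.I_sq)
  · exact anticomm_of_polar_zero v1 v2 (by rw [polar_apply]; simp only [v1, v2]; norm_num [Matrix.cons_val_two, Matrix.cons_val_three])
  · exact anticomm_of_polar_zero v1 v2d (by rw [polar_apply]; simp only [v1, v2d]; norm_num [Matrix.cons_val_two, Matrix.cons_val_three])
  · exact anticomm_of_polar_zero v1d v2 (by rw [polar_apply]; simp only [v1d, v2]; norm_num [Matrix.cons_val_two, Matrix.cons_val_three])
  · exact anticomm_of_polar_zero v1d v2d (by rw [polar_apply]; simp only [v1d, v2d]; norm_num [Matrix.cons_val_two, Matrix.cons_val_three])
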